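/- arXiv:1604.05540 — 3 statements merged into one kernel-verified Lean document; each statement's English description precedes it below -/
import Mathlib

section
/- Assume ν = 2κλ/θ² > 1/2. There exists a constant c depending only on κ, λ, θ, v₀, T such that for every partition 0 = t₀ < ⋯ < t_N = T and every M > 0 one has P( v_N ≥ M ) ≤ c · exp( −(2κ/θ²) M ). -/
open MeasureTheory ProbabilityTheory
open scoped ENNReal NNReal

noncomputable section

variable {Ω : Type*} [MeasurableSpace Ω]

/-- A standard Brownian motion (indexed by all of `ℝ`; only nonnegative times matter):
it starts at `0`, has Gaussian increments with the correct variance, and has independent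
increments. -/
structure IsBrownian (P : Measure Ω) (W : ℝ → Ω → ℝ) : Prop where
  meas : ∀ s : ℝ, Measurable (W s)
  start : ∀ ω, W 0 ω = 0
  gauss : ∀ s t : ℝ, 0 ≤ s → s ≤ t →
    Measure.map (fun ω => W t ω - W s ω) P = gaussianReal 0 (Real.toNNReal (t - s))
  indep : ∀ u : ℕ → ℝ, Monotone u →
    iIndepFun (fun k ω => W (u (k + 1)) ω - W (u k) ω) P

/-- A partition `0 = t₀ < t₁ < ⋯ < t_N = T` of `[0, T]`. -/
structure IsPartition (t : ℕ → ℝ) (N : ℕ) (T : ℝ) : Prop where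
  zero : t 0 = 0
  last : t N = T
  lt : ∀ k < N, t k < t (k + 1)

/-- The mesh `Δ = max_{1 ≤ k ≤ N} (t_k - t_{k-1})` of a partition. -/
def mesh (t : ℕ → ℝ) (N : ℕ) : ℝ := ⨆ k ∈ Finset.range N, (t (k + 1) - t k)

/-- The drift-implicit Milstein scheme `v_n` for the CIR process (closed form). -/
def milstein (κ lam θ v₀ : ℝ) (t : ℕ → ℝ) (W : ℝ → Ω → ℝ) : ℕ → Ω → ℝ
  | 0 => fun _ => v₀
  | n + 1 => fun ω =>
      (1 / (1 + κ * (t (n + 1) - t n))) *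
        ((Real.sqrt (milstein κ lam θ v₀ t W n ω)
            + (θ / 2) * (W (t (n + 1)) ω - W (t n) ω)) ^ 2
          + (κ * lam - θ ^ 2 / 4) * (t (n + 1) - t n))

/-- `n(s)`: the index of the largest partition point `≤ s`. -/
def nIdx (t : ℕ → ℝ) (N : ℕ) (s : ℝ) : ℕ := Nat.findGreatest (fun n => t n ≤ s) N

/-- `η(s)`: the largest partition point `≤ s`. -/
def eta (t : ℕ → ℝ) (N : ℕ) (s : ℝ) : ℝ := t (nIdx t N s)

/-- `ṽ_s`: the interpolation of the Milstein scheme before the implicit-drift division. -/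
def tildeV (κ lam θ v₀ : ℝ) (t : ℕ → ℝ) (N : ℕ) (W : ℝ → Ω → ℝ) (s : ℝ) (ω : Ω) : ℝ :=
  milstein κ lam θ v₀ t W (nIdx t N s) ω + κ * lam * (s - eta t N s)
    + θ * Real.sqrt (milstein κ lam θ v₀ t W (nIdx t N s) ω) * (W s ω - W (eta t N s) ω)
    + (θ ^ 2 / 4) * ((W s ω - W (eta t N s) ω) ^ 2 - (s - eta t N s))

/-- `v̂_s`: the continuous-time interpolation of the Milstein scheme. -/
def hatV (κ lam θ v₀ : ℝ) (t : ℕ → ℝ) (N : ℕ) (W : ℝ → Ω → ℝ) (s : ℝ) (ω : Ω) : ℝ :=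
  tildeV κ lam θ v₀ t N W s ω / (1 + κ * (s - eta t N s))


section Aux
variable {Ω : Type*} [MeasurableSpace Ω]

lemma integrable_rexp_quadratic' {A : ℝ} (hA : A < 0) (B C : ℝ) :
    Integrable (fun y : ℝ => Real.exp (A*y^2 + B*y + C)) := by
  have hA0 : A ≠ 0 := hA.ne
  have key : ∀ y : ℝ, Real.exp (A*y^2 + B*y + C)
      = Real.exp (-(-A) * (y + B/(2*A))^2) * Real.exp (C - B^2/(4*A)) := by
    intro y
    rw [← Real.exp_add]
    congr 1
    field_simp
    ring
  simp_rw [key]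
  exact ((integrable_exp_neg_mul_sq (by linarith)).comp_add_right (B/(2*A))).mul_const _

lemma integral_rexp_quadratic' {A : ℝ} (hA : A < 0) (B C : ℝ) :
    ∫ y : ℝ, Real.exp (A*y^2 + B*y + C)
      = Real.sqrt (Real.pi / -A) * Real.exp (C - B^2/(4*A)) := by
  have hA0 : A ≠ 0 := hA.ne
  have key : ∀ y : ℝ, Real.exp (A*y^2 + B*y + C)
      = Real.exp (-(-A) * (y + B/(2*A))^2) * Real.exp (C - B^2/(4*A)) := by
    intro y
    rw [← Real.exp_add]
    congr 1
    field_simp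
    ring
  simp_rw [key, integral_mul_const]
  rw [integral_add_right_eq_self (fun y : ℝ => Real.exp (-(-A) * y^2)) (B/(2*A)),
    integral_gaussian]

lemma lintegral_gaussian_exp_quadratic {s : ℝ} (hs : 0 < s) {A : ℝ} (B C : ℝ)
    (hA : A - 1/(2*s) < 0) :
    ∫⁻ y, ENNReal.ofReal (Real.exp (A*y^2 + B*y + C)) ∂(gaussianReal 0 s.toNNReal)
      = ENNReal.ofReal ((Real.sqrt (2*Real.pi*s))⁻¹ * (Real.sqrt (Real.pi / -(A - 1/(2*s))) *
          Real.exp (C - B^2 / (4*(A - 1/(2*s)))))) := by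
  have hs' : s.toNNReal ≠ 0 := by simp [hs, hs.le, hs.ne']
  rw [gaussianReal_of_var_ne_zero _ hs']
  rw [lintegral_withDensity_eq_lintegral_mul _ (measurable_gaussianPDF _ _)
    (by fun_prop)]
  have hpt : ∀ y : ℝ, (gaussianPDF 0 s.toNNReal * fun y => ENNReal.ofReal (Real.exp (A*y^2 + B*y + C))) y
      = ENNReal.ofReal ((Real.sqrt (2*Real.pi*s))⁻¹ * Real.exp ((A - 1/(2*s))*y^2 + B*y + C)) := by
    intro y
    simp only [Pi.mul_apply, gaussianPDF, gaussianPDFReal, Real.coe_toNNReal _ hs.le]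
    rw [← ENNReal.ofReal_mul (by positivity)]
    congr 1
    rw [mul_assoc, ← Real.exp_add]
    congr 2
    field_simp
    ring
  simp_rw [hpt]
  rw [← MeasureTheory.ofReal_integral_eq_lintegral_ofReal
    (((integrable_rexp_quadratic' hA B C).const_mul _))
    (Filter.Eventually.of_forall fun y => by positivity)]
  rw [MeasureTheory.integral_const_mul, integral_rexp_quadratic' hA B C]


/-- milstein as a function of the increments. -/
def milsteinAux (κ lam θ v₀ : ℝ) (t : ℕ → ℝ) : ℕ → (ℕ → ℝ) → ℝ
  | 0 => fun _ => v₀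
  | n + 1 => fun x =>
      (1 / (1 + κ * (t (n + 1) - t n))) *
        ((Real.sqrt (milsteinAux κ lam θ v₀ t n x) + (θ / 2) * x n) ^ 2
          + (κ * lam - θ ^ 2 / 4) * (t (n + 1) - t n))

lemma milsteinAux_eq (κ lam θ v₀ : ℝ) (t : ℕ → ℝ) (W : ℝ → Ω → ℝ) (n : ℕ) (ω : Ω) :
    milstein κ lam θ v₀ t W n ω
      = milsteinAux κ lam θ v₀ t n (fun k => W (t (k+1)) ω - W (t k) ω) := by
  induction n with
  | zero => rfl
  | succ n ih => simp only [milstein, milsteinAux, ih]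

lemma milsteinAux_congr (κ lam θ v₀ : ℝ) (t : ℕ → ℝ) {n : ℕ} {x y : ℕ → ℝ}
    (h : ∀ k < n, x k = y k) :
    milsteinAux κ lam θ v₀ t n x = milsteinAux κ lam θ v₀ t n y := by
  induction n with
  | zero => rfl
  | succ n ih =>
      simp only [milsteinAux]
      rw [ih (fun k hk => h k (hk.trans (Nat.lt_succ_self n))), h n (Nat.lt_succ_self n)]

lemma milsteinAux_measurable (κ lam θ v₀ : ℝ) (t : ℕ → ℝ) (n : ℕ) :
    Measurable (milsteinAux κ lam θ v₀ t n) := by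
  induction n with
  | zero => exact measurable_const
  | succ n ih =>
      simp only [milsteinAux]
      fun_prop

lemma milstein_measurable (κ lam θ v₀ : ℝ) (t : ℕ → ℝ) (W : ℝ → Ω → ℝ)
    (hW : ∀ s, Measurable (W s)) (n : ℕ) :
    Measurable (milstein κ lam θ v₀ t W n) := by
  have : milstein κ lam θ v₀ t W n
      = (milsteinAux κ lam θ v₀ t n) ∘ (fun ω k => W (t (k+1)) ω - W (t k) ω) := by
    funext ω; exact milsteinAux_eq κ lam θ v₀ t W n ω
  rw [this]
  exact (milsteinAux_measurable κ lam θ v₀ t n).comp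
    (measurable_pi_lambda _ fun k => (hW _).sub (hW _))

lemma milstein_nonneg {κ lam θ v₀ : ℝ} {t : ℕ → ℝ} (W : ℝ → Ω → ℝ)
    (hκ : 0 < κ) (hb : 0 ≤ κ * lam - θ ^ 2 / 4) (hv₀ : 0 ≤ v₀)
    {N : ℕ} (ht : ∀ k < N, t k < t (k+1)) {n : ℕ} (hn : n ≤ N) (ω : Ω) :
    0 ≤ milstein κ lam θ v₀ t W n ω := by
  induction n with
  | zero => exact hv₀
  | succ n ih =>
      have hΔ : 0 < t (n+1) - t n := sub_pos.mpr (ht n (Nat.lt_of_succ_le hn))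
      have h1 : 0 < 1 + κ * (t (n+1) - t n) := by positivity
      simp only [milstein]
      have := ih (Nat.le_of_succ_le hn)
      positivity

end Aux

set_option maxHeartbeats 1000000 in
/-- under `ν = 2κλ/θ² > 1/2`, there is a constant `c` depending only on
`κ, λ, θ, v₀, T` such that for every partition and every `M > 0` the drift-implicit Milstein
scheme satisfies the tail bound `P(v_N ≥ M) ≤ c exp(-(2κ/θ²)M)`. -/
theorem statement15
    {Ω : Type*} [MeasurableSpace Ω] (P : Measure Ω) [IsProbabilityMeasure P]
    (W : ℝ → Ω → ℝ) (hW : IsBrownian P W)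
    (κ lam θ v₀ T : ℝ)
    (hκ : 0 < κ) (hlam : 0 < lam) (hθ : 0 < θ) (hv₀ : 0 < v₀) (hT : 0 < T)
    (hFeller : 1 / 2 < 2 * κ * lam / θ ^ 2) :
    ∃ c : ℝ, ∀ (N : ℕ) (t : ℕ → ℝ), IsPartition t N T → ∀ M : ℝ, 0 < M →
      P {ω | M ≤ milstein κ lam θ v₀ t W N ω}
        ≤ ENNReal.ofReal (c * Real.exp (-(2 * κ / θ ^ 2) * M)) := by
  have hθ2 : (0:ℝ) < θ ^ 2 := by positivity
  set a : ℝ := 2 * κ / θ ^ 2 with ha_def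
  have ha : 0 < a := by positivity
  set b : ℝ := κ * lam - θ ^ 2 / 4 with hb_def
  have hb : 0 < b := by
    rw [lt_div_iff₀ hθ2] at hFeller
    simp only [hb_def]; nlinarith
  set d : ℝ := κ / 2 + a * b with hd_def
  have hd : 0 < d := by positivity
  refine ⟨Real.exp (a * v₀ + d * T), fun N t hpart M hM => ?_⟩
  -- basic partition facts
  have hmono : ∀ i j, i ≤ j → j ≤ N → t i ≤ t j := by
    intro i j hij hjN
    induction j with
    | zero => simp [Nat.le_zero.mp hij]
    | succ j ih =>
        rcases Nat.lt_or_ge i (j+1) with h | h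
        · exact le_trans (ih (Nat.lt_succ_iff.mp h) (Nat.le_of_succ_le hjN))
            (le_of_lt (hpart.lt j (Nat.lt_of_succ_le hjN)))
        · have : i = j + 1 := le_antisymm hij h
          simp [this]
  have ht0 : ∀ n, n ≤ N → 0 ≤ t n := fun n hn => hpart.zero ▸ hmono 0 n (Nat.zero_le n) hn
  -- the extended monotone time grid
  set u : ℕ → ℝ := fun k => if k ≤ N then t k else t N + ((k - N : ℕ) : ℝ) with hu_def
  have hu : Monotone u := by
    apply monotone_nat_of_le_succ
    intro k
    simp only [hu_def]
    rcases Nat.lt_or_ge k N with h | h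
    · rw [if_pos h.le, if_pos (Nat.succ_le_of_lt h)]
      exact (hpart.lt k h).le
    · rcases Nat.eq_or_lt_of_le h with h' | h'
      · subst h'; simp [Nat.not_succ_le_self]
      · rw [if_neg (by omega), if_neg (by omega)]
        have h2 : (k - N : ℕ) ≤ (k + 1 - N : ℕ) := by omega
        have h3 : ((k - N : ℕ) : ℝ) ≤ ((k + 1 - N : ℕ) : ℝ) := Nat.cast_le.mpr h2
        linarith
  have hut : ∀ k, k ≤ N → u k = t k := fun k hk => by simp [hu_def, hk]
  set g : ℕ → Ω → ℝ := fun k ω => W (u (k+1)) ω - W (u k) ω with hg_def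
  have hgmeas : ∀ k, Measurable (g k) := fun k => ((hW.meas _).sub (hW.meas _))
  have hIndep := hW.indep u hu
  have hXmeas : ∀ n, Measurable (milstein κ lam θ v₀ t W n) :=
    milstein_measurable κ lam θ v₀ t W hW.meas
  have hXnn : ∀ n, n ≤ N → ∀ ω, 0 ≤ milstein κ lam θ v₀ t W n ω :=
    fun n hn ω => milstein_nonneg W hκ hb.le hv₀.le hpart.lt hn ω
  -- the key exponential moment bound
  have key : ∀ n, n ≤ N →
      ∫⁻ ω, ENNReal.ofReal (Real.exp (a * milstein κ lam θ v₀ t W n ω)) ∂P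
        ≤ ENNReal.ofReal (Real.exp (a * v₀ + d * t n)) := by
    intro n hn
    induction n with
    | zero =>
        simp only [milstein, lintegral_const, measure_univ, mul_one, hpart.zero, mul_zero,
          add_zero]
        exact le_rfl
    | succ n ih =>
        have hnN : n < N := Nat.lt_of_succ_le hn
        have ihb := ih (Nat.le_of_succ_le hn)
        set Δ : ℝ := t (n+1) - t n with hΔ_def
        have hΔ : 0 < Δ := sub_pos.mpr (hpart.lt n hnN)
        have h1 : (0:ℝ) < 1 + κ * Δ := by positivity
        set c' : ℝ := a / (1 + κ * Δ) with hc'_def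
        have hc' : 0 < c' := by positivity
        set X : Ω → ℝ := milstein κ lam θ v₀ t W n with hX_def
        set Y : Ω → ℝ := fun ω => W (t (n+1)) ω - W (t n) ω with hY_def
        have hYm : Measurable Y := (hW.meas _).sub (hW.meas _)
        -- independence of X and Y
        have hXY : IndepFun X Y P := by
          classical
          have hdisj : Disjoint (Finset.range n) ({n} : Finset ℕ) := by
            simp only [Finset.disjoint_left, Finset.mem_range, Finset.mem_singleton]
            omega
          have hfin := hIndep.indepFun_finset (Finset.range n) {n} hdisj hgmeas
          set φ : ((i : (Finset.range n : Finset ℕ)) → ℝ) → ℝ := fun x =>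
            milsteinAux κ lam θ v₀ t n
              (fun k => if h : k ∈ Finset.range n then x ⟨k, h⟩ else 0) with hφ_def
          have hφ : Measurable φ := by
            apply (milsteinAux_measurable κ lam θ v₀ t n).comp
            apply measurable_pi_lambda
            intro k
            by_cases h : k ∈ Finset.range n
            · simp only [h, dif_pos]; exact measurable_pi_apply _
            · simp only [h, dif_neg, not_false_iff]; exact measurable_const
          set ψ : ((i : ({n} : Finset ℕ)) → ℝ) → ℝ := fun x =>
            x ⟨n, Finset.mem_singleton_self n⟩ with hψ_def
          have hψ : Measurable ψ := measurable_pi_apply _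
          have hcomp := hfin.comp hφ hψ
          have heq1 : (φ ∘ fun ω (i : (Finset.range n : Finset ℕ)) => g i ω) = X := by
            funext ω
            simp only [Function.comp_apply, hφ_def]
            rw [milsteinAux_congr κ lam θ v₀ t
              (y := fun k => W (t (k+1)) ω - W (t k) ω)
              (fun k hk => by
                have hk1 : k ∈ Finset.range n := Finset.mem_range.mpr hk
                have hkN : k ≤ N := le_of_lt (lt_of_lt_of_le hk (Nat.le_of_lt hnN))
                have hk1N : k + 1 ≤ N := Nat.succ_le_of_lt (lt_of_lt_of_le hk hnN.le)
                simp only [hk1, dif_pos, hg_def, hut k hkN, hut (k+1) hk1N])]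
            exact (milsteinAux_eq κ lam θ v₀ t W n ω).symm
          have heq2 : (ψ ∘ fun ω (i : ({n} : Finset ℕ)) => g i ω) = Y := by
            funext ω
            simp only [Function.comp_apply, hψ_def, hg_def, hY_def,
              hut n hnN.le, hut (n+1) (Nat.succ_le_of_lt hnN)]
          rw [heq1, heq2] at hcomp
          exact hcomp
        have hYlaw : P.map Y = gaussianReal 0 Δ.toNNReal :=
          hW.gauss (t n) (t (n+1)) (ht0 n hnN.le) (hpart.lt n hnN).le
        -- the 2d function
        set Φ : ℝ × ℝ → ℝ≥0∞ := fun p =>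
          ENNReal.ofReal (Real.exp (c' * ((Real.sqrt p.1 + (θ/2) * p.2)^2 + b * Δ))) with hΦ_def
        have hΦm : Measurable Φ := by
          apply ENNReal.measurable_ofReal.comp
          apply Real.measurable_exp.comp
          fun_prop
        have hpt : ∀ ω, ENNReal.ofReal (Real.exp (a * milstein κ lam θ v₀ t W (n+1) ω))
            = Φ (X ω, Y ω) := by
          intro ω
          simp only [hΦ_def, milstein, hX_def, hY_def]
          congr 2
          rw [hc'_def, hΔ_def, hb_def]
          field_simp
        calc ∫⁻ ω, ENNReal.ofReal (Real.exp (a * milstein κ lam θ v₀ t W (n+1) ω)) ∂P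
            = ∫⁻ ω, Φ (X ω, Y ω) ∂P := by simp_rw [hpt]
          _ = ∫⁻ p, Φ p ∂(P.map (fun ω => (X ω, Y ω))) :=
              (lintegral_map hΦm ((hXmeas n).prodMk hYm)).symm
          _ = ∫⁻ p, Φ p ∂((P.map X).prod (P.map Y)) := by
              rw [(indepFun_iff_map_prod_eq_prod_map_map (hXmeas n).aemeasurable
                hYm.aemeasurable).mp hXY]
          _ = ∫⁻ x, ∫⁻ y, Φ (x, y) ∂(P.map Y) ∂(P.map X) := by
              have : IsProbabilityMeasure (P.map Y) := Measure.isProbabilityMeasure_map hYm.aemeasurable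
              exact lintegral_prod _ hΦm.aemeasurable
          _ = ∫⁻ x, ENNReal.ofReal (Real.sqrt (1 + κ * Δ) *
                (Real.exp (c' * b * Δ) * Real.exp (a * (Real.sqrt x)^2))) ∂(P.map X) := by
              rw [hYlaw]
              apply lintegral_congr
              intro x
              have hA' : c' * θ^2/4 - 1/(2*Δ) = -(1/(2*Δ*(1+κ*Δ))) := by
                rw [hc'_def, ha_def]
                field_simp
                ring
              have hAneg : c' * θ^2/4 - 1/(2*Δ) < 0 := by
                rw [hA']
                have : (0:ℝ) < 1/(2*Δ*(1+κ*Δ)) := by positivity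
                linarith
              have hrw : ∀ y : ℝ, Φ (x, y) = ENNReal.ofReal (Real.exp
                  ((c' * θ^2/4) * y^2 + (c' * θ * Real.sqrt x) * y
                    + (c' * (Real.sqrt x)^2 + c' * b * Δ))) := by
                intro y
                simp only [hΦ_def]
                congr 2
                ring
              simp_rw [hrw]
              rw [lintegral_gaussian_exp_quadratic hΔ _ _ hAneg]
              congr 1
              have hsq : Real.pi / -(c' * θ^2/4 - 1/(2*Δ)) = 2*Real.pi*Δ*(1+κ*Δ) := by
                rw [hA']
                field_simp
              have h2πΔ : (0:ℝ) < 2*Real.pi*Δ := by positivity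
              rw [hsq, Real.sqrt_mul h2πΔ.le]
              have hexp : (c' * (Real.sqrt x)^2 + c' * b * Δ)
                  - (c' * θ * Real.sqrt x)^2 / (4*(c' * θ^2/4 - 1/(2*Δ)))
                  = a * (Real.sqrt x)^2 + c' * b * Δ := by
                rw [hA', hc'_def, ha_def]
                field_simp
                ring
              rw [hexp, Real.exp_add]
              have : Real.sqrt (2*Real.pi*Δ) ≠ 0 := by positivity
              field_simp
          _ = ∫⁻ ω, ENNReal.ofReal (Real.sqrt (1 + κ * Δ) *
                (Real.exp (c' * b * Δ) * Real.exp (a * (Real.sqrt (X ω))^2))) ∂P := by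
              apply lintegral_map _ (hXmeas n)
              fun_prop
          _ = ∫⁻ ω, ENNReal.ofReal (Real.sqrt (1 + κ * Δ) * Real.exp (c' * b * Δ))
                * ENNReal.ofReal (Real.exp (a * X ω)) ∂P := by
              apply lintegral_congr
              intro ω
              rw [Real.sq_sqrt (hXnn n (Nat.le_of_succ_le hn) ω), ← ENNReal.ofReal_mul
                (by positivity)]
              congr 1
              simp only [hX_def]
              ring
          _ = ENNReal.ofReal (Real.sqrt (1 + κ * Δ) * Real.exp (c' * b * Δ))
                * ∫⁻ ω, ENNReal.ofReal (Real.exp (a * X ω)) ∂P := by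
              rw [lintegral_const_mul]
              fun_prop
          _ ≤ ENNReal.ofReal (Real.exp (d * Δ))
                * ENNReal.ofReal (Real.exp (a * v₀ + d * t n)) := by
              apply mul_le_mul'
              · apply ENNReal.ofReal_le_ofReal
                have h1' : Real.sqrt (1 + κ * Δ) ≤ Real.exp (κ * Δ / 2) := by
                  rw [Real.exp_half]
                  apply Real.sqrt_le_sqrt
                  linarith [Real.add_one_le_exp (κ * Δ)]
                have h2' : Real.exp (c' * b * Δ) ≤ Real.exp (a * b * Δ) := by
                  apply Real.exp_le_exp.mpr
                  have hc'a : c' ≤ a := by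
                    rw [hc'_def]
                    apply div_le_self ha.le
                    linarith [mul_pos hκ hΔ]
                  have : 0 ≤ b * Δ := by positivity
                  nlinarith
                calc Real.sqrt (1 + κ * Δ) * Real.exp (c' * b * Δ)
                    ≤ Real.exp (κ * Δ / 2) * Real.exp (a * b * Δ) := by
                      apply mul_le_mul h1' h2' (Real.exp_pos _).le (Real.exp_pos _).le
                  _ = Real.exp (d * Δ) := by rw [← Real.exp_add, hd_def]; ring_nf
              · exact ihb
          _ = ENNReal.ofReal (Real.exp (a * v₀ + d * t (n+1))) := by
              rw [← ENNReal.ofReal_mul (Real.exp_pos _).le, ← Real.exp_add]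
              congr 1
              rw [hΔ_def]
              ring
  -- Chernoff / Markov step
  have hN := key N le_rfl
  rw [hpart.last] at hN
  set S : Set Ω := {ω | M ≤ milstein κ lam θ v₀ t W N ω} with hS_def
  have hmarkov : ENNReal.ofReal (Real.exp (a * M)) * P S
      ≤ ∫⁻ ω, ENNReal.ofReal (Real.exp (a * milstein κ lam θ v₀ t W N ω)) ∂P := by
    have hsub : S ⊆ {ω | ENNReal.ofReal (Real.exp (a * M))
        ≤ ENNReal.ofReal (Real.exp (a * milstein κ lam θ v₀ t W N ω))} := by
      intro ω hω
      exact ENNReal.ofReal_le_ofReal (Real.exp_le_exp.mpr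
        (mul_le_mul_of_nonneg_left hω ha.le))
    calc ENNReal.ofReal (Real.exp (a * M)) * P S
        ≤ ENNReal.ofReal (Real.exp (a * M)) * P {ω | ENNReal.ofReal (Real.exp (a * M))
            ≤ ENNReal.ofReal (Real.exp (a * milstein κ lam θ v₀ t W N ω))} :=
          mul_le_mul_right (measure_mono hsub) _
      _ ≤ _ := mul_meas_ge_le_lintegral₀ ((ENNReal.measurable_ofReal.comp (Real.measurable_exp.comp ((hXmeas N).const_mul a))).aemeasurable) _
  have hεne : ENNReal.ofReal (Real.exp (a * M)) ≠ 0 := by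
    simp [Real.exp_pos]
  have hεtop : ENNReal.ofReal (Real.exp (a * M)) ≠ ⊤ := ENNReal.ofReal_ne_top
  have hfinal : P S ≤ (ENNReal.ofReal (Real.exp (a * M)))⁻¹
      * ENNReal.ofReal (Real.exp (a * v₀ + d * T)) := by
    rw [← one_mul (P S), ← ENNReal.inv_mul_cancel hεne hεtop, mul_assoc]
    exact mul_le_mul_right (hmarkov.trans hN) _
  refine hfinal.trans_eq ?_
  rw [← ENNReal.ofReal_inv_of_pos (Real.exp_pos _), ← Real.exp_neg,
    ← ENNReal.ofReal_mul (Real.exp_pos _).le, ← Real.exp_add]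
  rw [ENNReal.ofReal_eq_ofReal_iff (Real.exp_pos _).le (by positivity)]
  rw [← Real.exp_add]
  congr 1
  rw [ha_def]
  ring

end
end

section
/- Assume ν = 2κλ/θ² > 1/2 and ρ < 0. Then, almost surely, ρ · Σ_{k=0}^{N−1} √(v_k) Δ_kW ≤ (|ρ|/θ) · ( v₀ + κλT + (θ²/4) Σ_{k=0}^{N−1} (Δ_kW)² ). -/
open MeasureTheory ProbabilityTheory
open scoped ENNReal NNReal

noncomputable section

variable {Ω : Type*} [MeasurableSpace Ω]

/-- under `ν = 2κλ/θ² > 1/2` and `ρ ∈ [-1, 0)`, almost surely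
`ρ Σ_{k<N} √(v_k) Δ_kW ≤ (|ρ|/θ)(v₀ + κλT + (θ²/4) Σ_{k<N} (Δ_kW)²)`. -/
theorem statement16
    {Ω : Type*} [MeasurableSpace Ω] (P : Measure Ω) [IsProbabilityMeasure P]
    (W : ℝ → Ω → ℝ) (hW : IsBrownian P W)
    (κ lam θ v₀ T ρ : ℝ)
    (hκ : 0 < κ) (hlam : 0 < lam) (hθ : 0 < θ) (hv₀ : 0 < v₀) (hT : 0 < T)
    (hFeller : 1 / 2 < 2 * κ * lam / θ ^ 2) (hρ₁ : -1 ≤ ρ) (hρ : ρ < 0) :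
    ∀ (N : ℕ) (t : ℕ → ℝ), IsPartition t N T →
      ∀ᵐ ω ∂P,
        ρ * ∑ k ∈ Finset.range N,
            Real.sqrt (milstein κ lam θ v₀ t W k ω) * (W (t (k + 1)) ω - W (t k) ω)
          ≤ (|ρ| / θ) * (v₀ + κ * lam * T
              + (θ ^ 2 / 4) * ∑ k ∈ Finset.range N, (W (t (k + 1)) ω - W (t k) ω) ^ 2) := by
  intro N t ht
  refine Filter.Eventually.of_forall fun ω => ?_
  set v : ℕ → ℝ := fun k => milstein κ lam θ v₀ t W k ω with hvdef
  set ΔW : ℕ → ℝ := fun k => W (t (k + 1)) ω - W (t k) ω with hΔWdef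
  have hkl : θ ^ 2 / 4 < κ * lam := by
    have hθ2 : (0:ℝ) < θ ^ 2 := by positivity
    rw [lt_div_iff₀ hθ2] at hFeller
    nlinarith
  -- nonnegativity of the scheme
  have hvpos : ∀ k ≤ N, 0 ≤ v k := by
    intro k hk
    induction k with
    | zero => exact hv₀.le
    | succ n ih =>
      have hdt : 0 < t (n + 1) - t n := sub_pos.2 (ht.lt n (by omega))
      have hden : 0 < 1 + κ * (t (n + 1) - t n) := by positivity
      have : v (n + 1) = (1 / (1 + κ * (t (n + 1) - t n))) *
          ((Real.sqrt (v n) + (θ / 2) * ΔW n) ^ 2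
            + (κ * lam - θ ^ 2 / 4) * (t (n + 1) - t n)) := rfl
      rw [this]
      have h1 : 0 ≤ (Real.sqrt (v n) + (θ / 2) * ΔW n) ^ 2 := sq_nonneg _
      have h2 : 0 ≤ (κ * lam - θ ^ 2 / 4) * (t (n + 1) - t n) := by nlinarith
      positivity
  -- key pointwise inequality
  have key : ∀ k ∈ Finset.range N,
      -(θ * (Real.sqrt (v k) * ΔW k)) ≤
        (v k - v (k + 1)) + κ * lam * (t (k + 1) - t k) + θ ^ 2 / 4 * (ΔW k) ^ 2 := by
    intro k hk
    have hk' := Finset.mem_range.1 hk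
    have hdt : 0 < t (k + 1) - t k := sub_pos.2 (ht.lt k hk')
    have hden : 0 < 1 + κ * (t (k + 1) - t k) := by positivity
    have hvk : 0 ≤ v k := hvpos k (by omega)
    have hvk1 : 0 ≤ v (k + 1) := hvpos (k + 1) (by omega)
    have hrec : v (k + 1) = (1 / (1 + κ * (t (k + 1) - t k))) *
        ((Real.sqrt (v k) + (θ / 2) * ΔW k) ^ 2
          + (κ * lam - θ ^ 2 / 4) * (t (k + 1) - t k)) := rfl
    have hsq : Real.sqrt (v k) ^ 2 = v k := Real.sq_sqrt hvk
    have hmul : (1 + κ * (t (k + 1) - t k)) * v (k + 1) =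
        v k + θ * (Real.sqrt (v k) * ΔW k) + θ ^ 2 / 4 * (ΔW k) ^ 2
          + (κ * lam - θ ^ 2 / 4) * (t (k + 1) - t k) := by
      rw [hrec, ← mul_assoc, mul_one_div_cancel hden.ne', one_mul]
      linear_combination hsq
    nlinarith [mul_nonneg (mul_nonneg hκ.le hdt.le) hvk1]
  -- sum up
  have hsum : ∑ k ∈ Finset.range N, -(θ * (Real.sqrt (v k) * ΔW k)) ≤
      ∑ k ∈ Finset.range N,
        ((v k - v (k + 1)) + κ * lam * (t (k + 1) - t k) + θ ^ 2 / 4 * (ΔW k) ^ 2) :=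
    Finset.sum_le_sum key
  have htel : ∑ k ∈ Finset.range N, (v k - v (k + 1)) = v 0 - v N := by
    exact Finset.sum_range_sub' v N
  have htT : ∑ k ∈ Finset.range N, (t (k + 1) - t k) = T := by
    rw [Finset.sum_range_sub t N, ht.zero, ht.last, sub_zero]
  have hRHS : -(θ * ∑ k ∈ Finset.range N, Real.sqrt (v k) * ΔW k) ≤
      v₀ + κ * lam * T + (θ ^ 2 / 4) * ∑ k ∈ Finset.range N, (ΔW k) ^ 2 := by
    have h1 : ∑ k ∈ Finset.range N, -(θ * (Real.sqrt (v k) * ΔW k)) =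
        -(θ * ∑ k ∈ Finset.range N, Real.sqrt (v k) * ΔW k) := by
      rw [Finset.mul_sum, ← Finset.sum_neg_distrib]
    have h2 : ∑ k ∈ Finset.range N,
        ((v k - v (k + 1)) + κ * lam * (t (k + 1) - t k) + θ ^ 2 / 4 * (ΔW k) ^ 2)
        = (v 0 - v N) + κ * lam * T + (θ ^ 2 / 4) * ∑ k ∈ Finset.range N, (ΔW k) ^ 2 := by
      rw [Finset.sum_add_distrib, Finset.sum_add_distrib, htel, ← Finset.mul_sum,
        ← Finset.mul_sum, mul_assoc, htT]
      ring
    have hvN : 0 ≤ v N := hvpos N le_rfl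
    have hv0 : v 0 = v₀ := rfl
    calc -(θ * ∑ k ∈ Finset.range N, Real.sqrt (v k) * ΔW k)
        ≤ (v 0 - v N) + κ * lam * T + (θ ^ 2 / 4) * ∑ k ∈ Finset.range N, (ΔW k) ^ 2 := by
          rw [← h1, ← h2]; exact hsum
      _ ≤ v₀ + κ * lam * T + (θ ^ 2 / 4) * ∑ k ∈ Finset.range N, (ΔW k) ^ 2 := by
          rw [hv0]; linarith
  have habs : |ρ| = -ρ := abs_of_neg hρ
  have hθne : θ ≠ 0 := hθ.ne'
  have hcoef : 0 ≤ |ρ| / θ := by positivity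
  calc ρ * ∑ k ∈ Finset.range N, Real.sqrt (v k) * ΔW k
      = (|ρ| / θ) * (-(θ * ∑ k ∈ Finset.range N, Real.sqrt (v k) * ΔW k)) := by
        rw [habs]; field_simp
    _ ≤ (|ρ| / θ) * (v₀ + κ * lam * T
          + (θ ^ 2 / 4) * ∑ k ∈ Finset.range N, (ΔW k) ^ 2) :=
        mul_le_mul_of_nonneg_left hRHS hcoef

end
end

section
/- Let θ > 0, c > 0 and p ≥ 1. There exists a constant C depending only on p, θ, c such that for every ξ ≥ 0, every Δ > 0 and every centered Gaussian random variable G with variance Δ, one has E[ ( ξ / ( (√ξ + (θ/2)G)² + cΔ ) )^p ] ≤ C; in particular C does not depend on ξ or Δ. -/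
open MeasureTheory ProbabilityTheory
open scoped ENNReal NNReal

-- aux 1: x^p * exp(-x) ≤ p^p
lemma aux_rpow_exp {p x : ℝ} (hp : 1 ≤ p) (hx : 0 ≤ x) :
    x ^ p * Real.exp (-x) ≤ p ^ p := by
  have hp0 : (0:ℝ) < p := lt_of_lt_of_le one_pos hp
  have h1 : x ≤ p * Real.exp (x / p) := by
    have h := Real.add_one_le_exp (x / p)
    have h' := mul_le_mul_of_nonneg_left h hp0.le
    rw [mul_add, mul_one, mul_div_cancel₀ _ hp0.ne'] at h'
    linarith
  have h2 : x ^ p ≤ (p * Real.exp (x / p)) ^ p :=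
    Real.rpow_le_rpow hx h1 hp0.le
  have h3 : (p * Real.exp (x / p)) ^ p = p ^ p * Real.exp x := by
    rw [Real.mul_rpow hp0.le (Real.exp_pos _).le, ← Real.exp_mul,
      div_mul_cancel₀ _ hp0.ne']
  have h4 : x ^ p ≤ p ^ p * Real.exp x := h3 ▸ h2
  calc x ^ p * Real.exp (-x) ≤ (p ^ p * Real.exp x) * Real.exp (-x) := by
        exact mul_le_mul_of_nonneg_right h4 (Real.exp_pos _).le
    _ = p ^ p := by rw [mul_assoc, ← Real.exp_add, add_neg_cancel, Real.exp_zero, mul_one]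

-- aux 2: gaussian exponential moment
lemma aux_gauss_exp (v : ℝ≥0) (hv : v ≠ 0) (b : ℝ) :
    ∫⁻ x, ENNReal.ofReal (Real.exp (b * x)) ∂(gaussianReal 0 v)
      = ENNReal.ofReal (Real.exp (b ^ 2 * v / 2)) := by
  rw [gaussianReal_of_var_ne_zero 0 hv]
  have hmeas : Measurable fun x : ℝ => ENNReal.ofReal (Real.exp (b * x)) :=
    ((measurable_id.const_mul b).exp).ennreal_ofReal
  rw [lintegral_withDensity_eq_lintegral_mul _ (measurable_gaussianPDF 0 v) hmeas]
  have hpt : ∀ x : ℝ, (gaussianPDF 0 v * fun x => ENNReal.ofReal (Real.exp (b * x))) x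
      = ENNReal.ofReal (Real.exp (b ^ 2 * v / 2)) * gaussianPDF (b * v) v x := by
    intro x
    simp only [Pi.mul_apply, gaussianPDF]
    rw [← ENNReal.ofReal_mul (gaussianPDFReal_nonneg 0 v x),
      ← ENNReal.ofReal_mul (Real.exp_pos _).le]
    congr 1
    unfold gaussianPDFReal
    have hv' : (0:ℝ) < (v:ℝ) := by positivity
    have key : Real.exp (-(x-0)^2/(2*(v:ℝ)) + b*x)
        = Real.exp (b^2*(v:ℝ)/2 + -(x-b*(v:ℝ))^2/(2*(v:ℝ))) := by
      congr 1; field_simp; ring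
    rw [mul_assoc, ← Real.exp_add, key, Real.exp_add]; ring
  simp_rw [hpt]
  rw [lintegral_const_mul _ (measurable_gaussianPDF _ v),
    lintegral_gaussianPDF_eq_one _ hv, mul_one]

set_option maxHeartbeats 1000000 in
/-- for `θ > 0`, `c > 0` and `p ≥ 1` there is a constant `C` depending only on
`p, θ, c` such that for every `ξ ≥ 0`, every `Δ > 0` and every centered Gaussian random
variable `G` with variance `Δ`, one has `E[(ξ/((√ξ + (θ/2)G)² + cΔ))^p] ≤ C`. -/
theorem statement19 (θ c p : ℝ) (hθ : 0 < θ) (hc : 0 < c) (hp : 1 ≤ p) :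
    ∃ C : ℝ, ∀ (ξ Δ : ℝ), 0 ≤ ξ → 0 < Δ →
      ∀ (Ω : Type) [MeasurableSpace Ω] (P : Measure Ω), IsProbabilityMeasure P →
        ∀ G : Ω → ℝ, Measure.map G P = gaussianReal 0 (Real.toNNReal Δ) →
          ∫⁻ ω, ENNReal.ofReal
              ((ξ / ((Real.sqrt ξ + (θ / 2) * G ω) ^ 2 + c * Δ)) ^ p) ∂P
            ≤ ENNReal.ofReal C := by
  have hp0 : (0:ℝ) < p := lt_of_lt_of_le one_pos hp
  refine ⟨(4:ℝ) ^ p + 2 * (2 * θ ^ 2 * p / c) ^ p, ?_⟩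
  intro ξ Δ hξ hΔ Ω _ P hP G hG
  set v : ℝ≥0 := Real.toNNReal Δ with hvdef
  have hv : v ≠ 0 := by
    simp only [hvdef, ne_eq, Real.toNNReal_eq_zero, not_le]; exact hΔ
  have hvΔ : (v:ℝ) = Δ := Real.coe_toNNReal Δ hΔ.le
  have hΔ0 : (0:ℝ) < c * Δ := by positivity
  -- abbreviations
  set a : ℝ := Real.sqrt ξ with hadef
  set t : ℝ := Real.sqrt ξ / θ with htdef
  set lam : ℝ := t / Δ with hlamdef
  set R : ℝ := (ξ / (c * Δ)) ^ p with hRdef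
  have ht0 : 0 ≤ t := div_nonneg (Real.sqrt_nonneg _) hθ.le
  have hlam0 : 0 ≤ lam := div_nonneg ht0 hΔ.le
  have hR0 : 0 ≤ R := Real.rpow_nonneg (div_nonneg hξ hΔ0.le) p
  have hsq : a * a = ξ := Real.mul_self_sqrt hξ
  have ha0 : 0 ≤ a := Real.sqrt_nonneg _
  -- measurability of F
  set F : ℝ → ℝ≥0∞ :=
    fun x => ENNReal.ofReal ((ξ / ((a + (θ / 2) * x) ^ 2 + c * Δ)) ^ p) with hFdef
  have hFmeas : Measurable F := by
    have hr : Measurable fun x : ℝ => ξ / ((a + (θ / 2) * x) ^ 2 + c * Δ) :=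
      measurable_const.div
        (((measurable_const.add (measurable_id.const_mul _)).pow_const 2).add measurable_const)
    exact ((Real.continuous_rpow_const hp0.le).measurable.comp hr).ennreal_ofReal
  -- G is AEMeasurable
  have hGmeas : AEMeasurable G P := by
    by_contra h
    rw [Measure.map_of_not_aemeasurable h] at hG
    have h1 : (gaussianReal 0 v) Set.univ = 1 := measure_univ
    rw [← hG] at h1
    simp at h1
  -- rewrite as integral over the gaussian
  have hmap : ∫⁻ ω, F (G ω) ∂P = ∫⁻ x, F x ∂(gaussianReal 0 v) := by
    rw [← hG]; exact (lintegral_map' hFmeas.aemeasurable hGmeas).symm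
  -- pointwise bound
  have hbd : ∀ x : ℝ, F x ≤ ENNReal.ofReal ((4:ℝ) ^ p) + ENNReal.ofReal R *
      (ENNReal.ofReal (Real.exp (-(lam * t))) *
        (ENNReal.ofReal (Real.exp (lam * x)) + ENNReal.ofReal (Real.exp (-lam * x)))) := by
    intro x
    have hDpos : 0 < (a + (θ / 2) * x) ^ 2 + c * Δ := by positivity
    rcases le_or_gt t |x| with h | h
    · -- tail case
      have hratio : ξ / ((a + (θ / 2) * x) ^ 2 + c * Δ) ≤ ξ / (c * Δ) := by
        apply div_le_div_of_nonneg_left hξ hΔ0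
        nlinarith [sq_nonneg (a + (θ / 2) * x)]
      have hrp : (ξ / ((a + (θ / 2) * x) ^ 2 + c * Δ)) ^ p ≤ R :=
        Real.rpow_le_rpow (div_nonneg hξ hDpos.le) hratio hp0.le
      have hone : (1:ℝ≥0∞) ≤ ENNReal.ofReal (Real.exp (-(lam * t))) *
          (ENNReal.ofReal (Real.exp (lam * x)) + ENNReal.ofReal (Real.exp (-lam * x))) := by
        rcases le_abs.mp h with hx | hx
        · have h1 : (1:ℝ) ≤ Real.exp (-(lam * t)) * Real.exp (lam * x) := by
            rw [← Real.exp_add]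
            apply Real.one_le_exp
            nlinarith [mul_le_mul_of_nonneg_left hx hlam0]
          calc (1:ℝ≥0∞) ≤ ENNReal.ofReal (Real.exp (-(lam * t)) * Real.exp (lam * x)) := by
                rw [← ENNReal.ofReal_one]; exact ENNReal.ofReal_le_ofReal h1
            _ = ENNReal.ofReal (Real.exp (-(lam * t))) * ENNReal.ofReal (Real.exp (lam * x)) :=
                ENNReal.ofReal_mul (Real.exp_pos _).le
            _ ≤ _ := mul_le_mul_right le_self_add _
        · have h1 : (1:ℝ) ≤ Real.exp (-(lam * t)) * Real.exp (-lam * x) := by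
            rw [← Real.exp_add]
            apply Real.one_le_exp
            nlinarith [mul_le_mul_of_nonneg_left hx hlam0]
          calc (1:ℝ≥0∞) ≤ ENNReal.ofReal (Real.exp (-(lam * t)) * Real.exp (-lam * x)) := by
                rw [← ENNReal.ofReal_one]; exact ENNReal.ofReal_le_ofReal h1
            _ = ENNReal.ofReal (Real.exp (-(lam * t))) * ENNReal.ofReal (Real.exp (-lam * x)) :=
                ENNReal.ofReal_mul (Real.exp_pos _).le
            _ ≤ _ := mul_le_mul_right le_add_self _
      calc F x ≤ ENNReal.ofReal R := ENNReal.ofReal_le_ofReal hrp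
        _ = ENNReal.ofReal R * 1 := (mul_one _).symm
        _ ≤ ENNReal.ofReal R * _ := mul_le_mul_right hone _
        _ ≤ _ := le_add_self
    · -- central case
      have hθx : a + (θ / 2) * x ≥ a / 2 := by
        have h1 : -(θ / 2) * t ≤ (θ / 2) * x := by nlinarith [neg_abs_le x]
        have h2 : (θ / 2) * t = a / 2 := by
          rw [htdef, hadef]; field_simp
        nlinarith
      have hsq2 : (a / 2) ^ 2 ≤ (a + (θ / 2) * x) ^ 2 := by
        apply pow_le_pow_left₀ (by positivity) hθx
      have hratio : ξ / ((a + (θ / 2) * x) ^ 2 + c * Δ) ≤ 4 := by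
        rw [div_le_iff₀ hDpos]
        nlinarith
      have hrp : (ξ / ((a + (θ / 2) * x) ^ 2 + c * Δ)) ^ p ≤ (4:ℝ) ^ p :=
        Real.rpow_le_rpow (div_nonneg hξ hDpos.le) hratio hp0.le
      calc F x ≤ ENNReal.ofReal ((4:ℝ) ^ p) := ENNReal.ofReal_le_ofReal hrp
        _ ≤ _ := le_self_add
  -- the gaussian exponential integrals
  set E : ℝ := Real.exp (lam ^ 2 * Δ / 2) with hEdef
  have hI1 : ∫⁻ x, ENNReal.ofReal (Real.exp (lam * x)) ∂(gaussianReal 0 v)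
      = ENNReal.ofReal E := by rw [aux_gauss_exp v hv lam, hvΔ]
  have hI2 : ∫⁻ x, ENNReal.ofReal (Real.exp (-lam * x)) ∂(gaussianReal 0 v)
      = ENNReal.ofReal E := by rw [aux_gauss_exp v hv (-lam), hvΔ, neg_sq]
  -- real-number final estimate
  set x0 : ℝ := ξ / (2 * θ ^ 2 * Δ) with hx0def
  have hx00 : 0 ≤ x0 := by positivity
  have hexpeq : Real.exp (-(lam * t)) * E = Real.exp (-x0) := by
    rw [hEdef, ← Real.exp_add]
    congr 1
    have ht2 : t ^ 2 = ξ / θ ^ 2 := by rw [htdef, div_pow, Real.sq_sqrt hξ]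
    rw [hlamdef, hx0def]
    have hθ' : θ ≠ 0 := hθ.ne'
    have hΔ' : Δ ≠ 0 := hΔ.ne'
    rw [eq_div_iff (by positivity : (θ:ℝ) ^ 2 ≠ 0)] at ht2
    field_simp
    linear_combination (-1) * ht2
  have hkey : R * Real.exp (-x0) ≤ (2 * θ ^ 2 * p / c) ^ p := by
    have harg : ξ / (c * Δ) = 2 * θ ^ 2 / c * x0 := by
      rw [hx0def]; field_simp
    rw [hRdef, harg, Real.mul_rpow (by positivity) hx00, mul_assoc,
      show 2 * θ ^ 2 * p / c = 2 * θ ^ 2 / c * p by ring,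
      Real.mul_rpow (by positivity) hp0.le]
    exact mul_le_mul_of_nonneg_left (aux_rpow_exp hp hx00)
      (Real.rpow_nonneg (by positivity) p)
  have hreal : (4:ℝ) ^ p + R * (Real.exp (-(lam * t)) * (E + E))
      ≤ (4:ℝ) ^ p + 2 * (2 * θ ^ 2 * p / c) ^ p := by
    have : R * (Real.exp (-(lam * t)) * (E + E)) = 2 * (R * Real.exp (-x0)) := by
      rw [← hexpeq]; ring
    rw [this]
    nlinarith [hkey]
  have hm1 : Measurable fun x : ℝ => ENNReal.ofReal (Real.exp (lam * x)) :=
    ((measurable_id.const_mul lam).exp).ennreal_ofReal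
  -- put everything together
  calc ∫⁻ ω, ENNReal.ofReal
        ((ξ / ((Real.sqrt ξ + (θ / 2) * G ω) ^ 2 + c * Δ)) ^ p) ∂P
      = ∫⁻ x, F x ∂(gaussianReal 0 v) := hmap
    _ ≤ ∫⁻ x, (ENNReal.ofReal ((4:ℝ) ^ p) + ENNReal.ofReal R *
        (ENNReal.ofReal (Real.exp (-(lam * t))) *
          (ENNReal.ofReal (Real.exp (lam * x)) + ENNReal.ofReal (Real.exp (-lam * x)))))
        ∂(gaussianReal 0 v) := lintegral_mono hbd
    _ = ENNReal.ofReal ((4:ℝ) ^ p) + ENNReal.ofReal R *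
        (ENNReal.ofReal (Real.exp (-(lam * t))) *
          (ENNReal.ofReal E + ENNReal.ofReal E)) := by
        rw [lintegral_add_left measurable_const, lintegral_const, measure_univ, mul_one,
          lintegral_const_mul' _ _ ENNReal.ofReal_ne_top,
          lintegral_const_mul' _ _ ENNReal.ofReal_ne_top,
          lintegral_add_left hm1, hI1, hI2]
    _ = ENNReal.ofReal ((4:ℝ) ^ p + R * (Real.exp (-(lam * t)) * (E + E))) := by
        rw [← ENNReal.ofReal_add (Real.exp_pos _).le (Real.exp_pos _).le,
          ← ENNReal.ofReal_mul (Real.exp_pos _).le, ← ENNReal.ofReal_mul hR0,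
          ← ENNReal.ofReal_add (by positivity) (by positivity)]
    _ ≤ ENNReal.ofReal ((4:ℝ) ^ p + 2 * (2 * θ ^ 2 * p / c) ^ p) :=
        ENNReal.ofReal_le_ofReal hreal
end
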